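/- arXiv:2510.16323 — 5 statements merged into one kernel-verified Lean document; each statement's English description precedes it below -/
import Mathlib

section
/- For every integer r ≥ 1 and all rational numbers μ > μ' ≥ −1 with μ ≥ 0, one has β_{r,μ'} < β_{r,μ}. -/
/-- `α_μ := ⌊μ⌋ + 1`, floor taken in `ℚ`, viewed as a rational number. -/
def alphaQ (μ : ℚ) : ℚ := (⌊μ⌋ : ℚ) + 1

/-- `β_{r,μ} := r·α_μ·(2μ − α_μ + 2)`. -/
def betaQ (r : ℤ) (μ : ℚ) : ℚ := (r : ℚ) * alphaQ μ * (2 * μ - alphaQ μ + 2)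

theorem stmt_4 (r : ℤ) (hr : 1 ≤ r) (μ μ' : ℚ) (hμ' : -1 ≤ μ') (hμμ : μ' < μ)
    (hμ : 0 ≤ μ) : betaQ r μ' < betaQ r μ := by
  unfold betaQ alphaQ
  have h1 := Int.floor_le μ
  have h2 := Int.lt_floor_add_one μ
  have h1' := Int.floor_le μ'
  have h2' := Int.lt_floor_add_one μ'
  have h3 : ⌊μ'⌋ ≤ ⌊μ⌋ := Int.floor_le_floor hμμ.le
  have h4 : (-1 : ℚ) ≤ ⌊μ'⌋ := by
    have : (-1 : ℤ) ≤ ⌊μ'⌋ := Int.le_floor.mpr (by exact_mod_cast hμ')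
    exact_mod_cast this
  have h6 : (0:ℚ) ≤ ⌊μ⌋ := by
    have : (0 : ℤ) ≤ ⌊μ⌋ := Int.le_floor.mpr (by exact_mod_cast hμ)
    exact_mod_cast this
  have hr' : (0:ℚ) < (r:ℚ) := by exact_mod_cast hr.trans_lt' (by norm_num)
  have key : ((⌊μ'⌋:ℚ) + 1) * (2 * μ' - ((⌊μ'⌋:ℚ) + 1) + 2) <
      ((⌊μ⌋:ℚ) + 1) * (2 * μ - ((⌊μ⌋:ℚ) + 1) + 2) := by
    rcases eq_or_lt_of_le h3 with h | h
    · rw [h]; nlinarith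
    · have h5 : (⌊μ'⌋:ℚ) + 1 ≤ (⌊μ⌋:ℚ) := by exact_mod_cast h
      nlinarith [mul_nonneg (by linarith : (0:ℚ) ≤ (⌊μ'⌋:ℚ)+1) (by linarith : (0:ℚ) ≤ μ' - ⌊μ'⌋)]
  calc (r:ℚ) * ((⌊μ'⌋:ℚ)+1) * (2 * μ' - ((⌊μ'⌋:ℚ)+1) + 2)
      = (r:ℚ) * (((⌊μ'⌋:ℚ)+1) * (2 * μ' - ((⌊μ'⌋:ℚ)+1) + 2)) := by ring
    _ < (r:ℚ) * (((⌊μ⌋:ℚ)+1) * (2 * μ - ((⌊μ⌋:ℚ)+1) + 2)) := by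
        exact mul_lt_mul_of_pos_left key hr'
    _ = (r:ℚ) * ((⌊μ⌋:ℚ)+1) * (2 * μ - ((⌊μ⌋:ℚ)+1) + 2) := by ring
end

section
/- Fix non-negative integers a ≤ b and a positive integer r, and set μ := (a+b)/(2r). For an integer ℓ with −1 ≤ ℓ ≤ ⌊(b−a)/r⌋ define μ''_ℓ := μ − (ℓ+1)/2 and θ_ℓ := β_{r,μ''_ℓ} + (ℓ+1)(r+a). Then for every integer ℓ with 0 ≤ ℓ ≤ ⌊(b−a)/r⌋, one has θ_ℓ < θ_{ℓ−1}, unless ℓ = ⌊(b−a)/r⌋, or ℓ = ⌊(b−a)/r⌋ − 1 and ⌊μ''_{ℓ−1}⌋ = ⌊μ''_ℓ⌋. -/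
theorem stmt_5_aux (a b r : ℤ) (ha : 0 ≤ a) (hab : a ≤ b) (hr : 1 ≤ r)
    (ℓ : ℤ) (hℓ0 : 0 ≤ ℓ) (hℓ : ℓ ≤ ⌊((b : ℚ) - a) / r⌋) :
    betaQ r (((a : ℚ) + b) / (2 * r) - ((ℓ : ℚ) + 1) / 2) + ((ℓ : ℚ) + 1) * ((r : ℚ) + a) <
      betaQ r (((a : ℚ) + b) / (2 * r) - (((ℓ - 1 : ℤ) : ℚ) + 1) / 2) +
        (((ℓ - 1 : ℤ) : ℚ) + 1) * ((r : ℚ) + a) ∨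
    ℓ = ⌊((b : ℚ) - a) / r⌋ ∨
      (ℓ = ⌊((b : ℚ) - a) / r⌋ - 1 ∧
        ⌊((a : ℚ) + b) / (2 * r) - (((ℓ - 1 : ℤ) : ℚ) + 1) / 2⌋ =
          ⌊((a : ℚ) + b) / (2 * r) - ((ℓ : ℚ) + 1) / 2⌋) := by
  by_cases hF1 : ℓ = ⌊((b : ℚ) - a) / r⌋
  · exact Or.inr (Or.inl hF1)
  have hℓF : ℓ + 1 ≤ ⌊((b : ℚ) - a) / r⌋ := by omega
  have hrQ : (0 : ℚ) < r := by exact_mod_cast hr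
  have hm1 : ((a : ℚ) + b) / (2 * r) - (((ℓ - 1 : ℤ) : ℚ) + 1) / 2 =
      (((a : ℚ) + b) / (2 * r) - ((ℓ : ℚ) + 1) / 2) + 1/2 := by
    push_cast; ring
  rw [hm1]
  set m : ℚ := ((a : ℚ) + b) / (2 * r) - ((ℓ : ℚ) + 1) / 2 with hmdef
  set k : ℤ := ⌊m⌋ with hk
  clear_value m k
  have hk_le : (k : ℚ) ≤ m := by rw [hk]; exact Int.floor_le m
  have hk_lt : m < (k : ℚ) + 1 := by rw [hk]; exact Int.lt_floor_add_one m
  have h2rm : 2 * (r : ℚ) * m = a + b - r * ((ℓ : ℚ) + 1) := by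
    rw [hmdef]; field_simp
  have hfloor2 : ⌊m + 1/2⌋ = k ∨ ⌊m + 1/2⌋ = k + 1 := by
    have h1 : k ≤ ⌊m + 1/2⌋ := by rw [hk]; exact Int.floor_le_floor (by linarith)
    have h2 : ⌊m + 1/2⌋ ≤ k + 1 := by
      have := Int.floor_le_floor (R := ℚ) (show m + 1/2 ≤ m + 1 by linarith)
      simpa [hk] using this
    omega
  have hFle : ((⌊((b : ℚ) - a) / r⌋ : ℤ) : ℚ) ≤ ((b : ℚ) - a) / r := Int.floor_le _
  have hba : (r : ℚ) * ((ℓ : ℚ) + 1) ≤ (b : ℚ) - a := by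
    have h1 : ((ℓ : ℚ) + 1) ≤ ((⌊((b : ℚ) - a) / r⌋ : ℤ) : ℚ) := by exact_mod_cast hℓF
    have h2 : ((ℓ : ℚ) + 1) ≤ ((b : ℚ) - a) / r := le_trans h1 hFle
    rw [le_div_iff₀ hrQ] at h2
    linarith
  by_cases heq : ⌊m + 1/2⌋ = k
  · -- floors equal
    by_cases hF2 : ℓ = ⌊((b : ℚ) - a) / r⌋ - 1
    · exact Or.inr (Or.inr ⟨hF2, heq⟩)
    left
    have hℓF2 : ℓ + 2 ≤ ⌊((b : ℚ) - a) / r⌋ := by omega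
    have hba2 : (r : ℚ) * ((ℓ : ℚ) + 2) ≤ (b : ℚ) - a := by
      have h1 : ((ℓ : ℚ) + 2) ≤ ((⌊((b : ℚ) - a) / r⌋ : ℤ) : ℚ) := by exact_mod_cast hℓF2
      have h2 : ((ℓ : ℚ) + 2) ≤ ((b : ℚ) - a) / r := le_trans h1 hFle
      rw [le_div_iff₀ hrQ] at h2
      linarith
    have hq : (a : ℚ) / r * r = a := div_mul_cancel₀ _ (ne_of_gt hrQ)
    have hm2 : (a : ℚ) / r + 1 ≤ m + 1/2 := by
      rw [← sub_nonneg]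
      have h3 : (2 * (r : ℚ)) * (m + 1/2 - ((a : ℚ)/r + 1)) =
          (b : ℚ) - a - (r * ((ℓ : ℚ) + 2)) := by
        field_simp
        linarith [h2rm]
      nlinarith [hba2, hrQ, h3]
    have hk2 : ⌊(a : ℚ) / r⌋ + 1 ≤ k := by
      have h4 := Int.floor_le_floor hm2
      rw [heq] at h4
      simpa using h4
    have hrk : (a : ℚ) < r * k := by
      have h5 : (a : ℚ) / r < (k : ℚ) := by
        have := Int.lt_floor_add_one ((a : ℚ) / r)
        have h6 : ((⌊(a : ℚ) / r⌋ : ℤ) : ℚ) + 1 ≤ (k : ℚ) := by exact_mod_cast hk2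
        linarith
      rw [div_lt_iff₀ hrQ] at h5
      linarith
    have hdiff : (betaQ r (m + 1/2) + (((ℓ - 1 : ℤ) : ℚ) + 1) * ((r : ℚ) + a)) -
        (betaQ r m + ((ℓ : ℚ) + 1) * ((r : ℚ) + a)) = (r : ℚ) * k - a := by
      unfold betaQ alphaQ
      rw [heq, ← hk]
      push_cast
      ring
    linarith [hdiff, hrk]
  · -- floors differ
    left
    have hfh : ⌊m + 1/2⌋ = k + 1 := by
      rcases hfloor2 with h | h
      · exact absurd h heq
      · exact h
    have hk3 : (k : ℚ) + 1 ≤ m + 1/2 := by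
      have := Int.floor_le (m + 1/2)
      rw [hfh] at this
      push_cast at this
      linarith
    have hprod : (r : ℚ) * ((k : ℚ) + 1) ≤ r * (m + 1/2) :=
      mul_le_mul_of_nonneg_left hk3 (le_of_lt hrQ)
    have hdiff : (betaQ r (m + 1/2) + (((ℓ - 1 : ℤ) : ℚ) + 1) * ((r : ℚ) + a)) -
        (betaQ r m + ((ℓ : ℚ) + 1) * ((r : ℚ) + a)) = 2 * (r : ℚ) * m - r * k - a := by
      unfold betaQ alphaQ
      rw [hfh, ← hk]
      push_cast
      ring
    have hpos : 0 < 2 * (r : ℚ) * m - r * k - a := by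
      nlinarith [h2rm, hba, hprod, hrQ]
    linarith [hdiff, hpos]

theorem stmt_5 (a b r : ℤ) (ha : 0 ≤ a) (hab : a ≤ b) (hr : 1 ≤ r)
    (ℓ : ℤ) (hℓ0 : 0 ≤ ℓ) (hℓ : ℓ ≤ ⌊((b : ℚ) - a) / r⌋) :
    letI μ : ℚ := ((a : ℚ) + b) / (2 * r)
    letI μ'' : ℤ → ℚ := fun l => μ - ((l : ℚ) + 1) / 2
    letI θ : ℤ → ℚ := fun l => betaQ r (μ'' l) + ((l : ℚ) + 1) * ((r : ℚ) + a)
    θ ℓ < θ (ℓ - 1) ∨ ℓ = ⌊((b : ℚ) - a) / r⌋ ∨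
      (ℓ = ⌊((b : ℚ) - a) / r⌋ - 1 ∧ ⌊μ'' (ℓ - 1)⌋ = ⌊μ'' ℓ⌋) := by
  exact stmt_5_aux a b r ha hab hr ℓ hℓ0 hℓ
end

section
/- Let k ≥ 0, r ≥ 1, ℓ ≥ 0 and m, n ≥ 0 be integers with 0 ≤ n − m < r and m + n < 2r, and set μ' := k + (m+n)/(2r). Then (r+m+n)(k+1)(k+ℓ+1) − m·k·(k+ℓ+1) − n·(k+1)(k+ℓ) = β_{r,μ'} + ℓ·(r + rk + m). -/
theorem stmt_12 (k r ℓ m n : ℤ) (hk : 0 ≤ k) (hr : 1 ≤ r) (hℓ : 0 ≤ ℓ)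
    (hm : 0 ≤ m) (hn : 0 ≤ n) (hnm : 0 ≤ n - m) (hnm' : n - m < r)
    (hmn : m + n < 2 * r) :
    letI μ' : ℚ := (k : ℚ) + ((m : ℚ) + n) / (2 * r)
    ((r : ℚ) + m + n) * ((k : ℚ) + 1) * ((k : ℚ) + ℓ + 1)
        - (m : ℚ) * k * ((k : ℚ) + ℓ + 1)
        - (n : ℚ) * ((k : ℚ) + 1) * ((k : ℚ) + ℓ)
      = betaQ r μ' + (ℓ : ℚ) * ((r : ℚ) + r * k + m) := by
  have hr0 : (0:ℚ) < (r:ℚ) := by exact_mod_cast hr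
  have hfrac0 : (0:ℚ) ≤ ((m : ℚ) + n) / (2 * r) := by positivity
  have hfrac1 : ((m : ℚ) + n) / (2 * r) < 1 := by
    rw [div_lt_one (by positivity)]
    exact_mod_cast hmn
  have hfloor : ⌊(k : ℚ) + ((m : ℚ) + n) / (2 * r)⌋ = k := by
    rw [add_comm, Int.floor_add_intCast, Int.floor_eq_zero_iff.mpr ⟨hfrac0, hfrac1⟩, zero_add]
  simp only [betaQ, alphaQ, hfloor]
  field_simp
  ring
end

section
/- Let r ≥ 2 and 1 ≤ r' ≤ r − 1 be integers, and let μ, μ' be rational numbers with −1 ≤ μ' ≤ μ and α_{μ'} = α_μ. Then β_{r',μ'} ≤ β_{r,μ} − α_μ². -/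
theorem stmt_13 (r r' : ℤ) (hr : 2 ≤ r) (hr'1 : 1 ≤ r') (hr' : r' ≤ r - 1)
    (μ μ' : ℚ) (hμ'1 : -1 ≤ μ') (hμμ : μ' ≤ μ) (hα : alphaQ μ' = alphaQ μ) :
    betaQ r' μ' ≤ betaQ r μ - (alphaQ μ) ^ 2 := by
  have h1 : alphaQ μ' ≤ μ' + 1 := by
    have := Int.floor_le μ'
    unfold alphaQ; linarith
  have h2 : (0 : ℚ) ≤ alphaQ μ' := by
    have : (-1 : ℤ) ≤ ⌊μ'⌋ := by exact_mod_cast Int.le_floor.mpr (by exact_mod_cast hμ'1)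
    unfold alphaQ
    have h : ((-1 : ℤ) : ℚ) ≤ (⌊μ'⌋ : ℚ) := by exact_mod_cast this
    push_cast at h; linarith
  have hr'q : (r' : ℚ) ≤ (r : ℚ) - 1 := by exact_mod_cast (by linarith : r' ≤ r - 1)
  have hr'1q : (1 : ℚ) ≤ (r' : ℚ) := by exact_mod_cast hr'1
  unfold betaQ
  rw [← hα]
  nlinarith [mul_nonneg h2 (by linarith : (0:ℚ) ≤ 2*μ' - alphaQ μ' + 2),
    mul_nonneg (by linarith : (0:ℚ) ≤ (r:ℚ) - 1 - r') (mul_nonneg h2 (by linarith : (0:ℚ) ≤ 2*μ - alphaQ μ' + 2)),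
    mul_nonneg h2 (by linarith : (0:ℚ) ≤ 2*μ - 2*(alphaQ μ') + 2),
    mul_nonneg (mul_nonneg (by linarith : (0:ℚ) ≤ (r':ℚ)) h2) (by linarith : (0:ℚ) ≤ 2*(μ - μ'))]
end

section
/- Let r ≥ 2 and 1 ≤ r' ≤ r − 1 be integers, and let μ, μ' be rational numbers with μ ≥ 0, μ' ≥ −1 and α_{μ'} ≤ α_μ − 1. Then β_{r',μ'} < β_{r,μ} − α_μ². -/
theorem stmt_14 (r r' : ℤ) (hr : 2 ≤ r) (hr'1 : 1 ≤ r') (hr' : r' ≤ r - 1)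
    (μ μ' : ℚ) (hμ : 0 ≤ μ) (hμ'1 : -1 ≤ μ') (hα : alphaQ μ' ≤ alphaQ μ - 1) :
    betaQ r' μ' < betaQ r μ - (alphaQ μ) ^ 2 := by
  unfold betaQ alphaQ at *
  set A : ℚ := (⌊μ⌋ : ℚ) + 1 with hA
  set A' : ℚ := (⌊μ'⌋ : ℚ) + 1 with hA'
  have hA1 : 1 ≤ A := by
    have : (0:ℤ) ≤ ⌊μ⌋ := Int.floor_nonneg.mpr hμ
    have : (0:ℚ) ≤ (⌊μ⌋:ℚ) := by exact_mod_cast this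
    linarith
  have hA'0 : 0 ≤ A' := by
    have : (-1:ℤ) ≤ ⌊μ'⌋ := by
      have := Int.le_floor.mpr (by exact_mod_cast hμ'1 : ((-1:ℤ):ℚ) ≤ μ')
      exact this
    have : (-1:ℚ) ≤ (⌊μ'⌋:ℚ) := by exact_mod_cast this
    linarith
  have hμA : A - 1 ≤ μ := by
    have := Int.floor_le μ; linarith
  have hμ'lt : μ' < A' := by
    have := Int.lt_floor_add_one μ'; linarith
  have hμ'ge : A' - 1 ≤ μ' := by
    have := Int.floor_le μ'; linarith
  have hrq : (2:ℚ) ≤ (r:ℚ) := by exact_mod_cast hr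
  have hr'q : (1:ℚ) ≤ (r':ℚ) := by exact_mod_cast hr'1
  have hrr' : (r':ℚ) ≤ (r:ℚ) - 1 := by
    have : (r':ℚ) ≤ ((r-1:ℤ):ℚ) := by exact_mod_cast hr'
    push_cast at this; linarith
  -- LHS < r' * A' * (A' + 2) ≤ (r-1)(A-1)(A+1) and RHS ≥ (r-1)A²
  have hRHS : ((r:ℚ) - 1) * A ^ 2 ≤ (r:ℚ) * A * (2 * μ - A + 2) - A ^ 2 := by
    nlinarith [mul_nonneg (by linarith : (0:ℚ) ≤ (r:ℚ)) (by linarith : (0:ℚ) ≤ A),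
      mul_le_mul_of_nonneg_left hμA (by positivity : (0:ℚ) ≤ (r:ℚ) * A)]
  rcases eq_or_lt_of_le hA'0 with h0 | h0
  · have : (r':ℚ) * A' * (2 * μ' - A' + 2) = 0 := by rw [← h0]; ring
    rw [this]
    nlinarith
  · have hLHS : (r':ℚ) * A' * (2 * μ' - A' + 2) < (r':ℚ) * A' * (A' + 2) := by
      have h1 : (0:ℚ) < (r':ℚ) * A' := by positivity
      have h2 : 2 * μ' - A' + 2 < A' + 2 := by linarith
      exact mul_lt_mul_of_pos_left h2 h1
    have hmid : (r':ℚ) * A' * (A' + 2) ≤ ((r:ℚ) - 1) * ((A - 1) * (A + 1)) := by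
      have hA'le : A' ≤ A - 1 := by linarith
      have h2 : A' * (A' + 2) ≤ (A - 1) * (A + 1) := by
        nlinarith [mul_nonneg (by linarith : (0:ℚ) ≤ A - (A' + 1)) (by linarith : (0:ℚ) ≤ A + (A' + 1))]
      nlinarith [mul_nonneg (by linarith : (0:ℚ) ≤ (r:ℚ) - 1 - r')
          (mul_nonneg h0.le (by linarith : (0:ℚ) ≤ A' + 2)),
        mul_le_mul_of_nonneg_left h2 (by linarith : (0:ℚ) ≤ (r:ℚ) - 1)]
    nlinarith
end
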